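/- arXiv:2509.16034 — 2 statements merged into one kernel-verified Lean document; each statement's English description precedes it below -/
import Mathlib

section
/- For every nonnegative integer n, the reduced factor complexity of the regular paperfolding sequence satisfies ρ_f^red(8n+3) = 6. -/
/-- The reduction of a word: replace each maximal run of identical characters
by a single character. -/
def red {α : Type*} [DecidableEq α] (w : List α) : List α :=
  w.destutter (· ≠ ·)

/-- The length-`k` factor of the infinite sequence `x` (1-indexed) starting at
position `i`. -/
def factorAt {α : Type*} (x : ℕ → α) (i k : ℕ) : List α :=
  (List.range k).map (fun j => x (i + j))

/-- The reduced factor complexity: the number of length-`n` factors of `x`,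
counted up to reduced-equivalence (`red v = red w`). -/
noncomputable def redFactorComplexity {α : Type*} [DecidableEq α]
    (x : ℕ → α) (n : ℕ) : ℕ :=
  Set.ncard { u : List α | ∃ i ≥ 1, u = red (factorAt x i n) }

/-- The Thue–Morse sequence (1-indexed): `t n` is the parity of the number of
1's in the binary expansion of `n - 1`. -/
def thueMorse (n : ℕ) : Bool :=
  decide ((Nat.digits 2 (n - 1)).sum % 2 = 1)

/-- The number of alternations (occurrences of 01 or 10) in a binary word. -/
def alt (w : List Bool) : ℕ :=
  (List.zipWith (fun a b => a != b) w w.tail).count true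

/-- The minimum number of alternations among length-`k` factors of Thue–Morse. -/
noncomputable def tmAltMin (k : ℕ) : ℕ :=
  sInf { a : ℕ | ∃ i ≥ 1, a = alt (factorAt thueMorse i k) }

/-- The maximum number of alternations among length-`k` factors of Thue–Morse. -/
noncomputable def tmAltMax (k : ℕ) : ℕ :=
  sSup { a : ℕ | ∃ i ≥ 1, a = alt (factorAt thueMorse i k) }

/-- The Thue–Morse morphism `0 → 01`, `1 → 10`. -/
def mu (w : List Bool) : List Bool :=
  w.flatMap (fun b => if b then [true, false] else [false, true])

/-- The regular paperfolding sequence (1-indexed): writing `n = n' * 2^k` with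
`n'` odd, `f n = 1` iff `n' ≡ 3 (mod 4)`. -/
def paperfold (n : ℕ) : Bool :=
  decide ((n / 2 ^ (n.factorization 2)) % 4 = 3)

/-- The reduced abelian complexity: the number of length-`n` factors of `x`,
counted up to the equivalence identifying `v` and `w` whenever `red v` is a
rearrangement of the characters of `red w`. -/
noncomputable def redAbelianComplexity {α : Type*} [DecidableEq α]
    (x : ℕ → α) (n : ℕ) : ℕ :=
  Set.ncard { m : Multiset α | ∃ i ≥ 1, m = ↑(red (factorAt x i n)) }

/-- alternating word of given first letter and length -/
def altword : Bool → ℕ → List Bool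
  | _, 0 => []
  | b, n + 1 => b :: altword (!b) n

lemma altword_length (b : Bool) (k : ℕ) : (altword b k).length = k := by
  induction k generalizing b with
  | zero => rfl
  | succ k ih => simp [altword, ih]

lemma alt_cons₂ (a b : Bool) (t : List Bool) :
    alt (a :: b :: t) = (a != b).toNat + alt (b :: t) := by
  cases h : (a != b) <;> simp [alt, List.count_cons, h] <;> omega

lemma alt_single (a : Bool) : alt [a] = 0 := rfl

lemma red_eq' (l : List Bool) : ∀ a : Bool,
    List.destutter' (· ≠ ·) a l = altword a (alt (a :: l) + 1) := by
  induction l with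
  | nil => intro a; simp [List.destutter'_nil, altword, alt_single]
  | cons b t ih =>
    intro a
    by_cases h : a = b
    · subst h
      rw [List.destutter'_cons_neg t (by simp), ih a, alt_cons₂]
      simp
    · rw [List.destutter'_cons_pos t h, ih b, alt_cons₂]
      have hb : b = !a := by cases a <;> cases b <;> simp_all
      subst hb
      simp [altword, Nat.add_comm]

lemma red_eq (a : Bool) (l : List Bool) :
    red (a :: l) = altword a (alt (a :: l) + 1) := red_eq' l a

lemma factorAt_succ {α : Type*} (x : ℕ → α) (i k : ℕ) :
    factorAt x i (k + 1) = x i :: factorAt x (i + 1) k := by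
  apply List.ext_getElem
  · simp [factorAt]
  · intro m h1 h2
    rcases m with _ | m <;> simp [factorAt] <;> congr 1 <;> omega

lemma alt_factor (x : ℕ → Bool) : ∀ (k i : ℕ),
    alt (factorAt x i (k + 1)) = ∑ j ∈ Finset.range k, (x (i + j) != x (i + j + 1)).toNat := by
  intro k
  induction k with
  | zero => intro i; rw [factorAt_succ]; simp [factorAt, alt_single]
  | succ k ih =>
    intro i
    rw [factorAt_succ, factorAt_succ, alt_cons₂, ← factorAt_succ, ih (i + 1),
      Finset.sum_range_succ']
    rw [Nat.add_comm]
    have hs : ∑ j ∈ Finset.range k, (x (i + 1 + j) != x (i + 1 + j + 1)).toNat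
        = ∑ j ∈ Finset.range k, (x (i + (j + 1)) != x (i + (j + 1) + 1)).toNat := by
      apply Finset.sum_congr rfl
      intro j _
      have h1 : i + 1 + j = i + (j + 1) := by omega
      rw [h1]
    rw [hs]
    simp

lemma pf_odd (j : ℕ) (h : j % 2 = 1) : paperfold j = decide (j % 4 = 3) := by
  have h0 : j.factorization 2 = 0 :=
    Nat.factorization_eq_zero_of_not_dvd (by omega)
  simp [paperfold, h0]

lemma pf_mod1 (j : ℕ) (h : j % 4 = 1) : paperfold j = false := by
  rw [pf_odd j (by omega)]
  simp
  omega

lemma pf_mod3 (j : ℕ) (h : j % 4 = 3) : paperfold j = true := by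
  rw [pf_odd j (by omega)]
  simp [h]

lemma pf_even (m : ℕ) (h : m ≠ 0) : paperfold (2 * m) = paperfold m := by
  have h2 : (2 * m).factorization 2 = m.factorization 2 + 1 := by
    rw [Nat.factorization_mul (by norm_num) h]
    simp only [Finsupp.add_apply]
    rw [Nat.Prime.factorization_self Nat.prime_two]
    omega
  unfold paperfold
  rw [h2, pow_succ]
  congr 2
  rw [Nat.mul_comm (2 ^ m.factorization 2) 2,
    Nat.mul_div_mul_left m (2 ^ m.factorization 2) (by norm_num)]

lemma pf_pair (m : ℕ) :
    (paperfold (2 * m + 1) != paperfold (2 * m + 2)).toNat +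
    (paperfold (2 * m + 2) != paperfold (2 * m + 3)).toNat = 1 := by
  have h1 := pf_odd (2 * m + 1) (by omega)
  have h3 := pf_odd (2 * m + 3) (by omega)
  have hne : paperfold (2 * m + 1) = !paperfold (2 * m + 3) := by
    rw [h1, h3]
    by_cases h : (2 * m + 3) % 4 = 3
    · simp [h]; omega
    · simp [h]; omega
  rw [hne]
  cases paperfold (2 * m + 2) <;> cases paperfold (2 * m + 3) <;> simp

lemma sum_pairs (a t : ℕ) :
    ∑ j ∈ Finset.range (2 * t),
      (paperfold (2 * a + 1 + j) != paperfold (2 * a + 1 + j + 1)).toNat = t := by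
  induction t with
  | zero => simp
  | succ t ih =>
    rw [show 2 * (t + 1) = 2 * t + 1 + 1 from by ring, Finset.sum_range_succ,
      Finset.sum_range_succ, ih]
    have hp := pf_pair (a + t)
    have e1 : 2 * a + 1 + 2 * t = 2 * (a + t) + 1 := by ring
    have e2 : 2 * a + 1 + 2 * t + 1 = 2 * (a + t) + 2 := by ring
    have e3 : 2 * a + 1 + (2 * t + 1) = 2 * (a + t) + 2 := by ring
    have e4 : 2 * a + 1 + (2 * t + 1) + 1 = 2 * (a + t) + 3 := by ring
    rw [e2, e1, e4, e3]
    omega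

lemma alt_odd (n a : ℕ) : alt (factorAt paperfold (2 * a + 1) (8 * n + 3)) = 4 * n + 1 := by
  rw [show 8 * n + 3 = (8 * n + 2) + 1 from rfl, alt_factor,
    show 8 * n + 2 = 2 * (4 * n + 1) from by ring]
  exact sum_pairs a (4 * n + 1)

lemma alt_even (n a : ℕ) :
    alt (factorAt paperfold (2 * a) (8 * n + 3)) =
      4 * n + (paperfold (2 * a) != paperfold (2 * a + 1)).toNat +
        (paperfold (2 * a + 8 * n + 1) != paperfold (2 * a + 8 * n + 2)).toNat := by
  rw [show 8 * n + 3 = (8 * n + 2) + 1 from rfl, alt_factor,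
    show 8 * n + 2 = (8 * n + 1) + 1 from rfl, Finset.sum_range_succ,
    Finset.sum_range_succ']
  have hm : ∑ j ∈ Finset.range (8 * n),
      (paperfold (2 * a + (j + 1)) != paperfold (2 * a + (j + 1) + 1)).toNat = 4 * n := by
    rw [show (4 : ℕ) * n = 4 * n from rfl]
    have := sum_pairs a (4 * n)
    rw [show 2 * (4 * n) = 8 * n from by ring] at this
    rw [← this]
    apply Finset.sum_congr rfl
    intro j _
    have h1 : 2 * a + 1 + j = 2 * a + (j + 1) := by omega
    rw [h1]
  rw [hm]
  have e1 : 2 * a + 0 = 2 * a := by omega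
  have e2 : 2 * a + 0 + 1 = 2 * a + 1 := by omega
  have e3 : 2 * a + (8 * n + 1) = 2 * a + 8 * n + 1 := by omega
  have e4 : 2 * a + (8 * n + 1) + 1 = 2 * a + 8 * n + 2 := by omega
  rw [e4, e3, e2, e1]

lemma red_window (i n : ℕ) :
    red (factorAt paperfold i (8 * n + 3)) =
      altword (paperfold i) (alt (factorAt paperfold i (8 * n + 3)) + 1) := by
  have h : factorAt paperfold i (8 * n + 3)
      = paperfold i :: factorAt paperfold (i + 1) (8 * n + 2) := by
    rw [show 8 * n + 3 = (8 * n + 2) + 1 from rfl, factorAt_succ]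
  rw [h, red_eq, ← h]

lemma toNat_le (b : Bool) : b.toNat ≤ 1 := by cases b <;> simp

-- paperfold value computations for witnesses
lemma pfv1 (n : ℕ) : paperfold (8 * n + 2) = false := by
  rw [show 8 * n + 2 = 2 * (4 * n + 1) from by ring, pf_even _ (by omega)]
  exact pf_mod1 _ (by omega)

lemma pfv2 (n : ℕ) : paperfold (16 * n + 4) = false := by
  rw [show 16 * n + 4 = 2 * (8 * n + 2) from by ring, pf_even _ (by omega)]
  exact pfv1 n

lemma pfv3 (n : ℕ) : paperfold (32 * n + 8) = false := by
  rw [show 32 * n + 8 = 2 * (16 * n + 4) from by ring, pf_even _ (by omega)]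
  exact pfv2 n

lemma pfv4 (n : ℕ) : paperfold (40 * n + 10) = false := by
  rw [show 40 * n + 10 = 2 * (20 * n + 5) from by ring, pf_even _ (by omega)]
  exact pf_mod1 _ (by omega)

lemma pfv5 (n : ℕ) : paperfold (48 * n + 12) = true := by
  rw [show 48 * n + 12 = 2 * (24 * n + 6) from by ring, pf_even _ (by omega),
    show 24 * n + 6 = 2 * (12 * n + 3) from by ring, pf_even _ (by omega)]
  exact pf_mod3 _ (by omega)

lemma pfv6 (n : ℕ) : paperfold (56 * n + 14) = true := by
  rw [show 56 * n + 14 = 2 * (28 * n + 7) from by ring, pf_even _ (by omega)]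
  exact pf_mod3 _ (by omega)

lemma pfv7 (n : ℕ) : paperfold (88 * n + 22) = true := by
  rw [show 88 * n + 22 = 2 * (44 * n + 11) from by ring, pf_even _ (by omega)]
  exact pf_mod3 _ (by omega)

lemma pfv8 (n : ℕ) : paperfold (96 * n + 24) = true := by
  rw [show 96 * n + 24 = 2 * (48 * n + 12) from by ring, pf_even _ (by omega)]
  exact pfv5 n

-- the six witnesses
lemma w1 (n : ℕ) :
    red (factorAt paperfold 1 (8 * n + 3)) = altword false (4 * n + 2) := by
  have h1 : alt (factorAt paperfold 1 (8 * n + 3)) = 4 * n + 1 := by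
    have := alt_odd n 0; simpa using this
  rw [red_window, h1, pf_mod1 1 (by norm_num)]

lemma w2 (n : ℕ) :
    red (factorAt paperfold 3 (8 * n + 3)) = altword true (4 * n + 2) := by
  have h1 : alt (factorAt paperfold 3 (8 * n + 3)) = 4 * n + 1 := by
    have := alt_odd n 1; simpa using this
  rw [red_window, h1, pf_mod3 3 (by norm_num)]

lemma w3 (n : ℕ) :
    red (factorAt paperfold (8 * n + 2) (8 * n + 3)) = altword false (4 * n + 3) := by
  have h := alt_even n (4 * n + 1)
  rw [show 2 * (4 * n + 1) = 8 * n + 2 from by ring] at h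
  rw [pfv1 n, pf_mod3 (8 * n + 2 + 1) (by omega),
    show 8 * n + 2 + 8 * n + 1 = 16 * n + 3 from by ring,
    show 8 * n + 2 + 8 * n + 2 = 16 * n + 4 from by ring,
    pf_mod3 (16 * n + 3) (by omega), pfv2 n] at h
  rw [red_window, h, pfv1 n]
  congr 1

lemma w4 (n : ℕ) :
    red (factorAt paperfold (32 * n + 8) (8 * n + 3)) = altword false (4 * n + 1) := by
  have h := alt_even n (16 * n + 4)
  rw [show 2 * (16 * n + 4) = 32 * n + 8 from by ring] at h
  rw [pfv3 n, pf_mod1 (32 * n + 8 + 1) (by omega),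
    show 32 * n + 8 + 8 * n + 1 = 40 * n + 9 from by ring,
    show 32 * n + 8 + 8 * n + 2 = 40 * n + 10 from by ring,
    pf_mod1 (40 * n + 9) (by omega), pfv4 n] at h
  rw [red_window, h, pfv3 n]
  congr 1

lemma w5 (n : ℕ) :
    red (factorAt paperfold (48 * n + 12) (8 * n + 3)) = altword true (4 * n + 3) := by
  have h := alt_even n (24 * n + 6)
  rw [show 2 * (24 * n + 6) = 48 * n + 12 from by ring] at h
  rw [pfv5 n, pf_mod1 (48 * n + 12 + 1) (by omega),
    show 48 * n + 12 + 8 * n + 1 = 56 * n + 13 from by ring,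
    show 48 * n + 12 + 8 * n + 2 = 56 * n + 14 from by ring,
    pf_mod1 (56 * n + 13) (by omega), pfv6 n] at h
  rw [red_window, h, pfv5 n]
  congr 1

lemma w6 (n : ℕ) :
    red (factorAt paperfold (88 * n + 22) (8 * n + 3)) = altword true (4 * n + 1) := by
  have h := alt_even n (44 * n + 11)
  rw [show 2 * (44 * n + 11) = 88 * n + 22 from by ring] at h
  rw [pfv7 n, pf_mod3 (88 * n + 22 + 1) (by omega),
    show 88 * n + 22 + 8 * n + 1 = 96 * n + 23 from by ring,
    show 88 * n + 22 + 8 * n + 2 = 96 * n + 24 from by ring,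
    pf_mod3 (96 * n + 23) (by omega), pfv8 n] at h
  rw [red_window, h, pfv7 n]
  congr 1

lemma hne_len (b c : Bool) (k l : ℕ) (h : k ≠ l) : altword b k ≠ altword c l := by
  intro hc
  apply h
  rw [← altword_length b k, hc, altword_length]

lemma hne_head (k : ℕ) : altword false (k + 1) ≠ altword true (k + 1) := by
  intro h
  simpa [altword] using h

theorem stmt15 (n : ℕ) :
    redFactorComplexity paperfold (8 * n + 3) = 6 := by
  have key : ∀ (b : Bool) (k : ℕ), (k = 4*n+1 ∨ k = 4*n+2 ∨ k = 4*n+3) →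
      (altword b k = altword false (4*n+1) ∨ altword b k = altword true (4*n+1) ∨
       altword b k = altword false (4*n+2) ∨ altword b k = altword true (4*n+2) ∨
       altword b k = altword false (4*n+3) ∨ altword b k = altword true (4*n+3)) := by
    rintro b k (rfl | rfl | rfl) <;> cases b <;> tauto
  have hset : { u : List Bool | ∃ i ≥ 1, u = red (factorAt paperfold i (8*n+3)) } =
      ↑({altword false (4*n+1), altword true (4*n+1), altword false (4*n+2),
         altword true (4*n+2), altword false (4*n+3), altword true (4*n+3)} :
         Finset (List Bool)) := by
    ext u
    simp only [Set.mem_setOf_eq, Finset.coe_insert, Set.mem_insert_iff,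
      Finset.coe_singleton, Set.mem_singleton_iff]
    constructor
    · rintro ⟨i, hi, rfl⟩
      rcases Nat.even_or_odd i with ⟨a, ha⟩ | ⟨a, ha⟩
      · rw [show i = 2*a from by omega, red_window, alt_even]
        apply key
        have t1 := toNat_le (paperfold (2*a) != paperfold (2*a+1))
        have t2 := toNat_le (paperfold (2*a+8*n+1) != paperfold (2*a+8*n+2))
        omega
      · rw [show i = 2*a+1 from by omega, red_window, alt_odd]
        apply key
        omega
    · rintro (rfl | rfl | rfl | rfl | rfl | rfl)
      · exact ⟨32*n+8, by omega, (w4 n).symm⟩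
      · exact ⟨88*n+22, by omega, (w6 n).symm⟩
      · exact ⟨1, le_refl 1, (w1 n).symm⟩
      · exact ⟨3, by omega, (w2 n).symm⟩
      · exact ⟨8*n+2, by omega, (w3 n).symm⟩
      · exact ⟨48*n+12, by omega, (w5 n).symm⟩
  rw [redFactorComplexity, hset, Set.ncard_coe_finset]
  have m1 : altword false (4*n+1) ∉ ({altword true (4*n+1), altword false (4*n+2),
      altword true (4*n+2), altword false (4*n+3), altword true (4*n+3)} :
      Finset (List Bool)) := by
    simp only [Finset.mem_insert, Finset.mem_singleton]
    push_neg
    exact ⟨hne_head _, hne_len _ _ _ _ (by omega), hne_len _ _ _ _ (by omega),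
      hne_len _ _ _ _ (by omega), hne_len _ _ _ _ (by omega)⟩
  have m2 : altword true (4*n+1) ∉ ({altword false (4*n+2),
      altword true (4*n+2), altword false (4*n+3), altword true (4*n+3)} :
      Finset (List Bool)) := by
    simp only [Finset.mem_insert, Finset.mem_singleton]
    push_neg
    exact ⟨hne_len _ _ _ _ (by omega), hne_len _ _ _ _ (by omega),
      hne_len _ _ _ _ (by omega), hne_len _ _ _ _ (by omega)⟩
  have m3 : altword false (4*n+2) ∉ ({altword true (4*n+2), altword false (4*n+3),
      altword true (4*n+3)} : Finset (List Bool)) := by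
    simp only [Finset.mem_insert, Finset.mem_singleton]
    push_neg
    exact ⟨hne_head _, hne_len _ _ _ _ (by omega), hne_len _ _ _ _ (by omega)⟩
  have m4 : altword true (4*n+2) ∉ ({altword false (4*n+3),
      altword true (4*n+3)} : Finset (List Bool)) := by
    simp only [Finset.mem_insert, Finset.mem_singleton]
    push_neg
    exact ⟨hne_len _ _ _ _ (by omega), hne_len _ _ _ _ (by omega)⟩
  have m5 : altword false (4*n+3) ∉ ({altword true (4*n+3)} : Finset (List Bool)) := by
    simp only [Finset.mem_singleton]
    have h : (4:ℕ)*n+3 = (4*n+2)+1 := by omega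
    rw [h]
    exact hne_head _
  rw [Finset.card_insert_of_notMem m1, Finset.card_insert_of_notMem m2,
    Finset.card_insert_of_notMem m3, Finset.card_insert_of_notMem m4,
    Finset.card_insert_of_notMem m5, Finset.card_singleton]
end

section
/- For every positive integer n, the reduced abelian complexity of the regular paperfolding sequence satisfies: ρ_f^{ab,red}(n) = 3 if n is even, ρ_f^{ab,red}(n) = 4 if n > 1 and n ≡ 1 (mod 4), and ρ_f^{ab,red}(n) = 5 if n ≡ 3 (mod 4). -/
namespace PF

lemma f_odd (m : ℕ) (h : m % 2 = 1) : paperfold m = decide (m % 4 = 3) := by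
  unfold paperfold
  have h2 : ¬ (2 ∣ m) := by omega
  rw [Nat.factorization_eq_zero_of_not_dvd h2]
  simp

lemma f_mod1 {m : ℕ} (h : m % 4 = 1) : paperfold m = false := by
  rw [f_odd m (by omega)]; simp [h]

lemma f_mod3 {m : ℕ} (h : m % 4 = 3) : paperfold m = true := by
  rw [f_odd m (by omega)]; simp [h]

lemma f_double (m : ℕ) (hm : 1 ≤ m) : paperfold (2 * m) = paperfold m := by
  unfold paperfold
  have h1 : (2 * m).factorization 2 = m.factorization 2 + 1 := by
    rw [Nat.factorization_mul (by norm_num) (by omega)]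
    simp [Nat.Prime.factorization_self (by norm_num : Nat.Prime 2), add_comm]
  rw [h1, pow_succ, mul_comm (2 ^ m.factorization 2) 2, ← Nat.div_div_eq_div_mul,
    Nat.mul_div_cancel_left _ (by norm_num : 0 < 2)]

end PF

namespace PF2

def msAlt (b : Bool) (r : ℕ) : Multiset Bool :=
  Multiset.replicate ((r + 1) / 2) b + Multiset.replicate (r / 2) (!b)

lemma msAlt_card (b : Bool) (r : ℕ) : Multiset.card (msAlt b r) = r := by
  simp [msAlt]; omega

lemma msAlt_count (b : Bool) (r : ℕ) : (msAlt b r).count b = (r + 1) / 2 := by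
  simp [msAlt, Multiset.count_replicate]

lemma msAlt_even {r : ℕ} (h : r % 2 = 0) : msAlt true r = msAlt false r := by
  unfold msAlt
  have : (r + 1) / 2 = r / 2 := by omega
  rw [this]
  simp [add_comm]

lemma msAlt_cons (b : Bool) (r : ℕ) : msAlt b (r + 1) = b ::ₘ msAlt (!b) r := by
  ext a
  cases a <;> cases b <;>
    simp [msAlt, Multiset.count_cons, Multiset.count_replicate] <;> omega

lemma msAlt_ne_card {b b' : Bool} {r r' : ℕ} (h : r ≠ r') : msAlt b r ≠ msAlt b' r' := by
  intro he
  exact h (by rw [← msAlt_card b r, ← msAlt_card b' r', he])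

lemma msAlt_ne_odd {r : ℕ} (h : r % 2 = 1) : msAlt true r ≠ msAlt false r := by
  intro he
  have h1 := msAlt_count true r
  rw [he] at h1
  simp [msAlt, Multiset.count_replicate] at h1
  omega

end PF2

namespace PF3
open PF

def dd (p : ℕ) : ℕ := if paperfold p = paperfold (p + 1) then 0 else 1

def SS (q : ℕ) : ℕ := ∑ p ∈ Finset.range q, dd (p + 1)

def gg (m : ℕ) : ℕ := dd (2 * m - 1)

lemma dd_le (p : ℕ) : dd p ≤ 1 := by unfold dd; split <;> omega

lemma gg_le (m : ℕ) : gg m ≤ 1 := dd_le _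

lemma SS_succ (q : ℕ) : SS (q + 1) = SS q + dd (q + 1) := Finset.sum_range_succ _ _

lemma dd_pair (m : ℕ) (hm : 1 ≤ m) : dd (2 * m - 1) + dd (2 * m) = 1 := by
  have h1 : 2 * m - 1 + 1 = 2 * m := by omega
  have h3 : paperfold (2 * m - 1) = !paperfold (2 * m + 1) := by
    rcases Nat.even_or_odd m with he | ho
    · obtain ⟨t, rfl⟩ := he
      rw [f_mod3 (m := 2 * (t + t) - 1) (by omega), f_mod1 (m := 2 * (t + t) + 1) (by omega)]
      rfl
    · obtain ⟨t, rfl⟩ := ho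
      rw [f_mod1 (m := 2 * (2 * t + 1) - 1) (by omega), f_mod3 (m := 2 * (2 * t + 1) + 1) (by omega)]
      rfl
  unfold dd
  rw [h1]
  rcases Bool.eq_false_or_eq_true (paperfold (2 * m)) with h | h <;>
    rcases Bool.eq_false_or_eq_true (paperfold (2 * m + 1)) with h' | h' <;>
      simp [h, h'] at h3 ⊢ <;> simp [h3]

lemma SS_even (M : ℕ) : SS (2 * M) = M := by
  induction M with
  | zero => simp [SS]
  | succ M ih =>
    have : 2 * (M + 1) = (2 * M + 1) + 1 := by omega
    rw [this, SS_succ, SS_succ, ih]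
    have hp := dd_pair (M + 1) (by omega)
    have h1 : 2 * (M + 1) - 1 = 2 * M + 1 := by omega
    have h2 : 2 * (M + 1) = 2 * M + 1 + 1 := by omega
    rw [h1, h2] at hp
    omega

lemma SS_odd (M : ℕ) : SS (2 * M + 1) = M + gg (M + 1) := by
  rw [SS_succ, SS_even, gg]
  have h : 2 * (M + 1) - 1 = 2 * M + 1 := by omega
  rw [h]

lemma SS_mono : Monotone SS := by
  intro p q h
  exact Finset.sum_le_sum_of_subset (by simpa using h)

end PF3

namespace PF4
open PF PF3

lemma gg_mod1 {m : ℕ} (h : m % 4 = 1) : gg m = 0 := by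
  unfold gg dd
  have h1 : 2 * m - 1 + 1 = 2 * m := by omega
  rw [h1, f_mod1 (m := 2 * m - 1) (by omega)]
  have h2 : paperfold (2 * m) = paperfold m := f_double m (by omega)
  rw [h2, f_mod1 h]
  simp

lemma gg_mod3 {m : ℕ} (h : m % 4 = 3) : gg m = 1 := by
  unfold gg dd
  have h1 : 2 * m - 1 + 1 = 2 * m := by omega
  rw [h1, f_mod1 (m := 2 * m - 1) (by omega)]
  have h2 : paperfold (2 * m) = paperfold m := f_double m (by omega)
  rw [h2, f_mod3 h]
  simp

lemma gg_even_val {u : ℕ} (hu : 1 ≤ u) : gg (2 * u) = if paperfold u = true then 0 else 1 := by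
  unfold gg dd
  have h1 : 2 * (2 * u) - 1 + 1 = 2 * (2 * u) := by omega
  rw [h1, f_mod3 (m := 2 * (2 * u) - 1) (by omega)]
  rw [f_double (2 * u) (by omega), f_double u hu]
  rcases Bool.eq_false_or_eq_true (paperfold u) with h | h <;> simp [h]

def AA (i n : ℕ) : ℕ := SS (i + n - 2) - SS (i - 1)

lemma AA_odd_odd (a k : ℕ) : AA (2 * a + 1) (2 * k + 1) = k := by
  unfold AA
  have h1 : 2 * a + 1 + (2 * k + 1) - 2 = 2 * (a + k) := by omega
  have h2 : 2 * a + 1 - 1 = 2 * a := by omega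
  rw [h1, h2, SS_even, SS_even]
  omega

lemma AA_odd_even (a k : ℕ) (hk : 1 ≤ k) : AA (2 * a + 1) (2 * k) = k - 1 + gg (a + k) := by
  unfold AA
  have h1 : 2 * a + 1 + 2 * k - 2 = 2 * (a + k - 1) + 1 := by omega
  have h2 : 2 * a + 1 - 1 = 2 * a := by omega
  rw [h1, h2, SS_odd, SS_even]
  have h3 : a + k - 1 + 1 = a + k := by omega
  rw [h3]
  have := gg_le (a + k)
  omega

lemma AA_even_even (s k : ℕ) (hs : 1 ≤ s) (hk : 1 ≤ k) : AA (2 * s) (2 * k) = k - gg s := by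
  unfold AA
  have h1 : 2 * s + 2 * k - 2 = 2 * (s + k - 1) := by omega
  have h2 : 2 * s - 1 = 2 * (s - 1) + 1 := by omega
  rw [h1, h2, SS_even, SS_odd]
  have h3 : s - 1 + 1 = s := by omega
  rw [h3]
  have := gg_le s
  omega

lemma AA_even_odd (s k : ℕ) (hs : 1 ≤ s) (hk : 1 ≤ k) :
    AA (2 * s) (2 * k + 1) = k + gg (s + k) - gg s := by
  unfold AA
  have h1 : 2 * s + (2 * k + 1) - 2 = 2 * (s + k - 1) + 1 := by omega
  have h2 : 2 * s - 1 = 2 * (s - 1) + 1 := by omega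
  rw [h1, h2, SS_odd, SS_odd]
  have h3 : s - 1 + 1 = s := by omega
  have h4 : s + k - 1 + 1 = s + k := by omega
  rw [h3, h4]
  have := gg_le s
  have := gg_le (s + k)
  omega

end PF4

namespace PF5
open PF PF2 PF3 PF4

lemma factorAt_succ {α : Type*} (x : ℕ → α) (i n : ℕ) :
    factorAt x i (n + 1) = x i :: factorAt x (i + 1) n := by
  unfold factorAt
  rw [List.range_succ_eq_map]
  simp only [List.map_cons, List.map_map, Nat.add_zero]
  congr 1
  apply List.map_congr_left
  intro j _
  show x (i + (j + 1)) = x (i + 1 + j)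
  congr 1
  omega

lemma red_factor : ∀ n, 1 ≤ n → ∀ i, 1 ≤ i →
    (↑(red (factorAt paperfold i n)) : Multiset Bool) = msAlt (paperfold i) (1 + AA i n) := by
  intro n hn
  induction n, hn using Nat.le_induction with
  | base =>
    intro i hi
    rw [factorAt_succ]
    have h0 : factorAt paperfold (i + 1) 0 = [] := by simp [factorAt]
    rw [h0]
    have hA : AA i 1 = 0 := by
      unfold AA
      have e : i + 1 - 2 = i - 1 := by omega
      rw [e, Nat.sub_self]
    rw [hA]
    simp [red, msAlt]
  | succ n hn ih =>
    intro i hi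
    obtain ⟨m, rfl⟩ : ∃ m, n = m + 1 := ⟨n - 1, by omega⟩
    rw [factorAt_succ, factorAt_succ]
    have hSi : SS i = SS (i - 1) + dd i := by
      have h1 := SS_succ (i - 1)
      have h2 : i - 1 + 1 = i := by omega
      rwa [h2] at h1
    have hih := ih (i + 1) (by omega)
    rw [factorAt_succ] at hih
    have e12 : i + 1 + 1 = i + 2 := by omega
    rw [e12] at hih
    simp only [red] at hih ⊢
    rw [List.destutter_cons'] at hih
    rw [e12]
    by_cases h : paperfold i = paperfold (i + 1)
    · have hdd : dd i = 0 := by simp [dd, h]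
      rw [List.destutter_cons_cons, if_neg (not_not_intro h), h]
      have hAA : AA i (m + 1 + 1) = AA (i + 1) (m + 1) := by
        unfold AA
        have e1 : i + (m + 1 + 1) - 2 = i + m := by omega
        have e2 : i + 1 + (m + 1) - 2 = i + m := by omega
        have e3 : i + 1 - 1 = i := by omega
        rw [e1, e2, e3]
        omega
      rw [hAA, hih]
    · have hdd : dd i = 1 := by simp [dd, h]
      rw [List.destutter_cons_cons, if_pos h]
      have hnot : paperfold (i + 1) = !(paperfold i) := by
        cases hb : paperfold i <;> cases hc : paperfold (i + 1) <;> simp_all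
      have hAA : AA i (m + 1 + 1) = AA (i + 1) (m + 1) + 1 := by
        unfold AA
        have e1 : i + (m + 1 + 1) - 2 = i + m := by omega
        have e2 : i + 1 + (m + 1) - 2 = i + m := by omega
        have e3 : i + 1 - 1 = i := by omega
        rw [e1, e2, e3]
        have hmono : SS i ≤ SS (i + m) := SS_mono (by omega)
        have hmono2 : SS (i - 1) ≤ SS i := SS_mono (by omega)
        omega
      rw [← Multiset.cons_coe, hih, hnot, hAA]
      rw [show 1 + (AA (i + 1) (m + 1) + 1) = (1 + AA (i + 1) (m + 1)) + 1 by omega]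
      rw [msAlt_cons]

end PF5

namespace PF6
open PF PF2 PF3 PF4 PF5

lemma ncard3 {α : Type*} {a b c : α} (h1 : a ≠ b) (h2 : a ≠ c) (h3 : b ≠ c) :
    ({a, b, c} : Set α).ncard = 3 := by
  rw [Set.ncard_insert_of_notMem (by simp [h1, h2]), Set.ncard_pair h3]

lemma ncard4 {α : Type*} {a b c d : α} (h1 : a ≠ b) (h2 : a ≠ c) (h3 : a ≠ d)
    (h4 : b ≠ c) (h5 : b ≠ d) (h6 : c ≠ d) :
    ({a, b, c, d} : Set α).ncard = 4 := by
  rw [Set.ncard_insert_of_notMem (by simp [h1, h2, h3]),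
    Set.ncard_insert_of_notMem (by simp [h4, h5]), Set.ncard_pair h6]

lemma ncard5 {α : Type*} {a b c d e : α} (h1 : a ≠ b) (h2 : a ≠ c) (h3 : a ≠ d) (h4 : a ≠ e)
    (h5 : b ≠ c) (h6 : b ≠ d) (h7 : b ≠ e) (h8 : c ≠ d) (h9 : c ≠ e) (h10 : d ≠ e) :
    ({a, b, c, d, e} : Set α).ncard = 5 := by
  rw [Set.ncard_insert_of_notMem (by simp [h1, h2, h3, h4]),
    Set.ncard_insert_of_notMem (by simp [h5, h6, h7]),
    Set.ncard_insert_of_notMem (by simp [h8, h9]), Set.ncard_pair h10]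

lemma f1 : paperfold 1 = false := f_mod1 (by norm_num)
lemma f2 : paperfold 2 = false := by rw [show (2:ℕ) = 2*1 from rfl, f_double 1 le_rfl, f1]
lemma f3 : paperfold 3 = true := f_mod3 (by norm_num)
lemma f4 : paperfold 4 = false := by rw [show (4:ℕ) = 2*2 from rfl, f_double 2 (by norm_num), f2]
lemma f6 : paperfold 6 = true := by rw [show (6:ℕ) = 2*3 from rfl, f_double 3 (by norm_num), f3]
lemma f8 : paperfold 8 = false := by rw [show (8:ℕ) = 2*4 from rfl, f_double 4 (by norm_num), f4]
lemma f12 : paperfold 12 = true := by rw [show (12:ℕ) = 2*6 from rfl, f_double 6 (by norm_num), f6]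

lemma gg1 : gg 1 = 0 := gg_mod1 (by norm_num)
lemma gg2 : gg 2 = 1 := by rw [show (2:ℕ) = 2*1 from rfl, gg_even_val le_rfl, f1]; simp
lemma gg3 : gg 3 = 1 := gg_mod3 (by norm_num)
lemma gg4 : gg 4 = 1 := by rw [show (4:ℕ) = 2*2 from rfl, gg_even_val (by norm_num), f2]; simp
lemma gg6 : gg 6 = 0 := by rw [show (6:ℕ) = 2*3 from rfl, gg_even_val (by norm_num), f3]; simp
lemma gg12 : gg 12 = 0 := by rw [show (12:ℕ) = 2*6 from rfl, gg_even_val (by norm_num), f6]; simp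

lemma exists_f_false_parity (N : ℕ) : ∃ v, N ≤ v ∧ v % 2 = N % 2 ∧ paperfold v = false := by
  rcases Nat.even_or_odd N with h | h
  · obtain ⟨t, rfl⟩ := h
    exact ⟨8 * (t + t) + 2, by omega, by omega,
      by rw [show 8 * (t + t) + 2 = 2 * (4 * (t + t) + 1) by omega, f_double _ (by omega)]
         exact f_mod1 (by omega)⟩
  · exact ⟨4 * N + 1, by omega, by rcases h with ⟨t, ht⟩; omega, f_mod1 (by omega)⟩

lemma exists_f_true_parity (N : ℕ) : ∃ v, N ≤ v ∧ v % 2 = N % 2 ∧ paperfold v = true := by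
  rcases Nat.even_or_odd N with h | h
  · obtain ⟨t, rfl⟩ := h
    exact ⟨8 * (t + t) + 6, by omega, by omega,
      by rw [show 8 * (t + t) + 6 = 2 * (4 * (t + t) + 3) by omega, f_double _ (by omega)]
         exact f_mod3 (by omega)⟩
  · exact ⟨4 * N + 3, by omega, by rcases h with ⟨t, ht⟩; omega, f_mod3 (by omega)⟩

lemma exists_true_false : ∀ d, 1 ≤ d → ∃ u, 1 ≤ u ∧ paperfold u = true ∧ paperfold (u + d) = false := by
  intro d
  induction d using Nat.strong_induction_on with
  | _ d ih =>
    intro hd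
    rcases Nat.lt_or_ge (d % 2) 1 with he | ho
    · -- d even
      obtain ⟨d', rfl⟩ : ∃ d', d = 2 * d' := ⟨d / 2, by omega⟩
      obtain ⟨u, hu, h1, h2⟩ := ih d' (by omega) (by omega)
      exact ⟨2 * u, by omega, by rw [f_double u hu]; exact h1,
        by rw [show 2 * u + 2 * d' = 2 * (u + d') by omega, f_double _ (by omega)]; exact h2⟩
    · rcases Nat.lt_or_ge (d % 4) 2 with h4 | h4
      · -- d % 4 = 1
        exact ⟨12, by omega, f12, f_mod1 (by omega)⟩
      · -- d % 4 = 3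
        exact ⟨6, by omega, f6, f_mod1 (by omega)⟩

lemma exists_false_true : ∀ d, 1 ≤ d → ∃ u, 1 ≤ u ∧ paperfold u = false ∧ paperfold (u + d) = true := by
  intro d
  induction d using Nat.strong_induction_on with
  | _ d ih =>
    intro hd
    rcases Nat.lt_or_ge (d % 2) 1 with he | ho
    · obtain ⟨d', rfl⟩ : ∃ d', d = 2 * d' := ⟨d / 2, by omega⟩
      obtain ⟨u, hu, h1, h2⟩ := ih d' (by omega) (by omega)
      exact ⟨2 * u, by omega, by rw [f_double u hu]; exact h1,
        by rw [show 2 * u + 2 * d' = 2 * (u + d') by omega, f_double _ (by omega)]; exact h2⟩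
    · rcases Nat.lt_or_ge (d % 4) 2 with h4 | h4
      · exact ⟨2, by omega, f2, f_mod3 (by omega)⟩
      · exact ⟨4, by omega, f4, f_mod3 (by omega)⟩

end PF6

namespace PF7
open PF PF2 PF3 PF4 PF5 PF6

lemma FS_eq (n : ℕ) (hn : 1 ≤ n) :
    {m : Multiset Bool | ∃ i ≥ 1, m = ↑(red (factorAt paperfold i n))} =
    {m : Multiset Bool | ∃ i ≥ 1, m = msAlt (paperfold i) (1 + AA i n)} := by
  ext m
  constructor
  · rintro ⟨i, hi, rfl⟩
    exact ⟨i, hi, by rw [red_factor n hn i hi]⟩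
  · rintro ⟨i, hi, rfl⟩
    exact ⟨i, hi, (red_factor n hn i hi).symm⟩

lemma set_even (k : ℕ) (hk : 1 ≤ k) :
    {m : Multiset Bool | ∃ i ≥ 1, m = msAlt (paperfold i) (1 + AA i (2 * k))} =
    {msAlt false k, msAlt true k, msAlt false (k + 1), msAlt true (k + 1)} := by
  ext m
  simp only [Set.mem_setOf_eq, Set.mem_insert_iff, Set.mem_singleton_iff]
  constructor
  · rintro ⟨i, hi, rfl⟩
    rcases Nat.even_or_odd i with hp | hp
    · obtain ⟨s, rfl⟩ := hp
      have hs : 1 ≤ s := by omega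
      have e : s + s = 2 * s := by omega
      rw [e, AA_even_even s k hs hk]
      have hg := gg_le s
      rcases Nat.le_one_iff_eq_zero_or_eq_one.mp hg with h0 | h1
      · rw [h0, show 1 + (k - 0) = k + 1 by omega]
        rcases Bool.eq_false_or_eq_true (paperfold (2 * s)) with hb | hb <;> rw [hb] <;> tauto
      · rw [h1, show 1 + (k - 1) = k by omega]
        rcases Bool.eq_false_or_eq_true (paperfold (2 * s)) with hb | hb <;> rw [hb] <;> tauto
    · obtain ⟨a, rfl⟩ := hp
      rw [AA_odd_even a k hk]
      have hg := gg_le (a + k)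
      rcases Nat.le_one_iff_eq_zero_or_eq_one.mp hg with h0 | h1
      · rw [h0, show 1 + (k - 1 + 0) = k by omega]
        rcases Bool.eq_false_or_eq_true (paperfold (2 * a + 1)) with hb | hb <;> rw [hb] <;> tauto
      · rw [h1, show 1 + (k - 1 + 1) = k + 1 by omega]
        rcases Bool.eq_false_or_eq_true (paperfold (2 * a + 1)) with hb | hb <;> rw [hb] <;> tauto
  · rintro (rfl | rfl | rfl | rfl)
    · refine ⟨4, by norm_num, ?_⟩
      have hA : AA 4 (2 * k) = k - 1 := by
        rw [show (4 : ℕ) = 2 * 2 from rfl, AA_even_even 2 k (by norm_num) hk, gg2]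
      rw [hA, f4, show 1 + (k - 1) = k by omega]
    · refine ⟨6, by norm_num, ?_⟩
      have hA : AA 6 (2 * k) = k - 1 := by
        rw [show (6 : ℕ) = 2 * 3 from rfl, AA_even_even 3 k (by norm_num) hk, gg3]
      rw [hA, f6, show 1 + (k - 1) = k by omega]
    · refine ⟨2, by norm_num, ?_⟩
      have hA : AA 2 (2 * k) = k := by
        rw [show (2 : ℕ) = 2 * 1 from rfl, AA_even_even 1 k (by norm_num) hk, gg1]; omega
      rw [hA, f2, show 1 + k = k + 1 by omega]
    · refine ⟨12, by norm_num, ?_⟩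
      have hA : AA 12 (2 * k) = k := by
        rw [show (12 : ℕ) = 2 * 6 from rfl, AA_even_even 6 k (by norm_num) hk, gg6]; omega
      rw [hA, f12, show 1 + k = k + 1 by omega]

lemma card_even (k : ℕ) (hk : 1 ≤ k) :
    ({msAlt false k, msAlt true k, msAlt false (k + 1), msAlt true (k + 1)} :
      Set (Multiset Bool)).ncard = 3 := by
  rcases Nat.even_or_odd k with he | ho
  · have hc : msAlt true k = msAlt false k := msAlt_even (by obtain ⟨t, rfl⟩ := he; omega)
    rw [hc, Set.insert_idem]
    exact ncard3 (msAlt_ne_card (by omega)) (msAlt_ne_card (by omega))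
      (Ne.symm (msAlt_ne_odd (by obtain ⟨t, rfl⟩ := he; omega)))
  · have hc : msAlt true (k + 1) = msAlt false (k + 1) :=
      msAlt_even (by obtain ⟨t, rfl⟩ := ho; omega)
    rw [hc, Set.pair_eq_singleton]
    exact ncard3 (msAlt_ne_odd (by obtain ⟨t, rfl⟩ := ho; omega)).symm
      (msAlt_ne_card (by omega)) (msAlt_ne_card (by omega))

lemma main_even (k : ℕ) (hk : 1 ≤ k) : redAbelianComplexity paperfold (2 * k) = 3 := by
  unfold redAbelianComplexity
  rw [FS_eq (2 * k) (by omega), set_even k hk]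
  exact card_even k hk

end PF7

namespace PF8
open PF PF2 PF3 PF4 PF5 PF6 PF7

lemma f24 : paperfold 24 = true := by
  rw [show (24 : ℕ) = 2 * 12 from rfl, f_double 12 (by norm_num), f12]

lemma set_odd1 (k : ℕ) (hk2 : 2 ≤ k) (hke : k % 2 = 0) :
    {m : Multiset Bool | ∃ i ≥ 1, m = msAlt (paperfold i) (1 + AA i (2 * k + 1))} =
    {msAlt false k, msAlt false (k + 1), msAlt true (k + 1), msAlt false (k + 2)} := by
  have hk1 : 1 ≤ k := by omega
  ext m
  simp only [Set.mem_setOf_eq, Set.mem_insert_iff, Set.mem_singleton_iff]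
  constructor
  · rintro ⟨i, hi, rfl⟩
    rcases Nat.even_or_odd i with hp | hp
    · obtain ⟨s, rfl⟩ := hp
      have hs : 1 ≤ s := by omega
      rw [show s + s = 2 * s by omega, AA_even_odd s k hs hk1]
      rcases Nat.le_one_iff_eq_zero_or_eq_one.mp (gg_le s) with h1 | h1 <;>
        rcases Nat.le_one_iff_eq_zero_or_eq_one.mp (gg_le (s + k)) with h2 | h2 <;>
          rw [h1, h2]
      · rw [show 1 + (k + 0 - 0) = k + 1 by omega]
        rcases Bool.eq_false_or_eq_true (paperfold (2 * s)) with hb | hb <;> rw [hb] <;> tauto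
      · rw [show 1 + (k + 1 - 0) = k + 2 by omega]
        rcases Bool.eq_false_or_eq_true (paperfold (2 * s)) with hb | hb <;> rw [hb]
        · rw [msAlt_even (show (k + 2) % 2 = 0 by omega)]; tauto
        · tauto
      · rw [show 1 + (k + 0 - 1) = k by omega]
        rcases Bool.eq_false_or_eq_true (paperfold (2 * s)) with hb | hb <;> rw [hb]
        · rw [msAlt_even hke]; tauto
        · tauto
      · rw [show 1 + (k + 1 - 1) = k + 1 by omega]
        rcases Bool.eq_false_or_eq_true (paperfold (2 * s)) with hb | hb <;> rw [hb] <;> tauto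
    · obtain ⟨a, rfl⟩ := hp
      rw [AA_odd_odd a k, show 1 + k = k + 1 by omega]
      rcases Bool.eq_false_or_eq_true (paperfold (2 * a + 1)) with hb | hb <;> rw [hb] <;> tauto
  · rintro (rfl | rfl | rfl | rfl)
    · obtain ⟨u, hu, hfu, hfud⟩ := exists_false_true (k / 2) (by omega)
      refine ⟨2 * (2 * u), by omega, ?_⟩
      have hgs : gg (2 * u) = 1 := by rw [gg_even_val hu, hfu]; simp
      have hgsk : gg (2 * u + k) = 0 := by
        rw [show 2 * u + k = 2 * (u + k / 2) by omega, gg_even_val (by omega), hfud]; simp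
      rw [AA_even_odd (2 * u) k (by omega) hk1, hgs, hgsk,
        show 1 + (k + 0 - 1) = k by omega, f_double (2 * u) (by omega), f_double u hu, hfu]
    · refine ⟨1, le_rfl, ?_⟩
      rw [show (1 : ℕ) = 2 * 0 + 1 from rfl, AA_odd_odd 0 k]
      rw [show 2 * 0 + 1 = 1 from rfl, f1, show 1 + k = k + 1 by omega]
    · refine ⟨3, by norm_num, ?_⟩
      rw [show (3 : ℕ) = 2 * 1 + 1 from rfl, AA_odd_odd 1 k]
      rw [show 2 * 1 + 1 = 3 from rfl, f3, show 1 + k = k + 1 by omega]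
    · obtain ⟨u, hu, hfu, hfud⟩ := exists_true_false (k / 2) (by omega)
      refine ⟨2 * (2 * u), by omega, ?_⟩
      have hgs : gg (2 * u) = 0 := by rw [gg_even_val hu, hfu]; simp
      have hgsk : gg (2 * u + k) = 1 := by
        rw [show 2 * u + k = 2 * (u + k / 2) by omega, gg_even_val (by omega), hfud]; simp
      rw [AA_even_odd (2 * u) k (by omega) hk1, hgs, hgsk,
        show 1 + (k + 1 - 0) = k + 2 by omega, f_double (2 * u) (by omega), f_double u hu, hfu]
      exact (msAlt_even (show (k + 2) % 2 = 0 by omega)).symm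

lemma card_odd1 (k : ℕ) (hk2 : 2 ≤ k) (hke : k % 2 = 0) :
    ({msAlt false k, msAlt false (k + 1), msAlt true (k + 1), msAlt false (k + 2)} :
      Set (Multiset Bool)).ncard = 4 :=
  ncard4 (msAlt_ne_card (by omega)) (msAlt_ne_card (by omega)) (msAlt_ne_card (by omega))
    (msAlt_ne_odd (by omega)).symm (msAlt_ne_card (by omega)) (msAlt_ne_card (by omega))

lemma main_odd1 (k : ℕ) (hk2 : 2 ≤ k) (hke : k % 2 = 0) :
    redAbelianComplexity paperfold (2 * k + 1) = 4 := by
  unfold redAbelianComplexity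
  rw [FS_eq (2 * k + 1) (by omega), set_odd1 k hk2 hke]
  exact card_odd1 k hk2 hke

end PF8

namespace PF9
open PF PF2 PF3 PF4 PF5 PF6 PF7 PF8

lemma set_odd3 (k : ℕ) (hko : k % 2 = 1) :
    {m : Multiset Bool | ∃ i ≥ 1, m = msAlt (paperfold i) (1 + AA i (2 * k + 1))} =
    {msAlt false k, msAlt true k, msAlt false (k + 1), msAlt false (k + 2),
      msAlt true (k + 2)} := by
  have hk1 : 1 ≤ k := by omega
  ext m
  simp only [Set.mem_setOf_eq, Set.mem_insert_iff, Set.mem_singleton_iff]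
  constructor
  · rintro ⟨i, hi, rfl⟩
    rcases Nat.even_or_odd i with hp | hp
    · obtain ⟨s, rfl⟩ := hp
      have hs : 1 ≤ s := by omega
      rw [show s + s = 2 * s by omega, AA_even_odd s k hs hk1]
      rcases Nat.le_one_iff_eq_zero_or_eq_one.mp (gg_le s) with h1 | h1 <;>
        rcases Nat.le_one_iff_eq_zero_or_eq_one.mp (gg_le (s + k)) with h2 | h2 <;>
          rw [h1, h2]
      · rw [show 1 + (k + 0 - 0) = k + 1 by omega]
        rcases Bool.eq_false_or_eq_true (paperfold (2 * s)) with hb | hb <;> rw [hb]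
        · rw [msAlt_even (show (k + 1) % 2 = 0 by omega)]; tauto
        · tauto
      · rw [show 1 + (k + 1 - 0) = k + 2 by omega]
        rcases Bool.eq_false_or_eq_true (paperfold (2 * s)) with hb | hb <;> rw [hb] <;> tauto
      · rw [show 1 + (k + 0 - 1) = k by omega]
        rcases Bool.eq_false_or_eq_true (paperfold (2 * s)) with hb | hb <;> rw [hb] <;> tauto
      · rw [show 1 + (k + 1 - 1) = k + 1 by omega]
        rcases Bool.eq_false_or_eq_true (paperfold (2 * s)) with hb | hb <;> rw [hb]
        · rw [msAlt_even (show (k + 1) % 2 = 0 by omega)]; tauto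
        · tauto
    · obtain ⟨a, rfl⟩ := hp
      rw [AA_odd_odd a k, show 1 + k = k + 1 by omega]
      rcases Bool.eq_false_or_eq_true (paperfold (2 * a + 1)) with hb | hb <;> rw [hb]
      · rw [msAlt_even (show (k + 1) % 2 = 0 by omega)]; tauto
      · tauto
  · have hAgen : ∀ s, 1 ≤ s → gg s = 1 → gg (s + k) = 0 →
        1 + AA (2 * s) (2 * k + 1) = k := by
      intro s hs h1 h2
      rw [AA_even_odd s k hs hk1, h1, h2]; omega
    have hAgen2 : ∀ s, 1 ≤ s → gg s = 0 → gg (s + k) = 1 →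
        1 + AA (2 * s) (2 * k + 1) = k + 2 := by
      intro s hs h1 h2
      rw [AA_even_odd s k hs hk1, h1, h2]; omega
    rintro (rfl | rfl | rfl | rfl | rfl)
    · -- msAlt false k
      rcases Nat.lt_or_ge (k % 4) 2 with h4 | h4
      · -- k % 4 = 1, s = 4
        refine ⟨2 * 4, by omega, ?_⟩
        rw [hAgen 4 (by omega) gg4 (gg_mod1 (by omega)),
          show 2 * 4 = 8 from rfl, f8]
      · -- k % 4 = 3, s = 2
        refine ⟨2 * 2, by omega, ?_⟩
        rw [hAgen 2 (by omega) gg2 (gg_mod1 (by omega)),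
          show 2 * 2 = 4 from rfl, f4]
    · -- msAlt true k
      obtain ⟨v, hvN, hvp, hfv⟩ := exists_f_true_parity ((k + 3) / 2)
      obtain ⟨t, rfl⟩ : ∃ t, v = (k + 3) / 2 + 2 * t := ⟨(v - (k + 3) / 2) / 2, by omega⟩
      set s := 4 * t + 3 with hsdef
      refine ⟨2 * s, by omega, ?_⟩
      have hsk : s + k = 2 * ((k + 3) / 2 + 2 * t) := by omega
      have hggsk : gg (s + k) = 0 := by
        rw [hsk, gg_even_val (by omega), hfv]; simp
      rw [hAgen s (by omega) (gg_mod3 (by omega)) hggsk,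
        f_double s (by omega), f_mod3 (by omega)]
    · -- msAlt false (k+1)
      refine ⟨1, le_rfl, ?_⟩
      rw [show (1 : ℕ) = 2 * 0 + 1 from rfl, AA_odd_odd 0 k]
      rw [show 2 * 0 + 1 = 1 from rfl, f1, show 1 + k = k + 1 by omega]
    · -- msAlt false (k+2)
      obtain ⟨v, hvN, hvp, hfv⟩ := exists_f_false_parity ((k + 1) / 2)
      obtain ⟨t, rfl⟩ : ∃ t, v = (k + 1) / 2 + 2 * t := ⟨(v - (k + 1) / 2) / 2, by omega⟩
      set s := 4 * t + 1 with hsdef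
      refine ⟨2 * s, by omega, ?_⟩
      have hsk : s + k = 2 * ((k + 1) / 2 + 2 * t) := by omega
      have hggsk : gg (s + k) = 1 := by
        rw [hsk, gg_even_val (by omega), hfv]; simp
      rw [hAgen2 s (by omega) (gg_mod1 (by omega)) hggsk,
        f_double s (by omega), f_mod1 (by omega)]
    · -- msAlt true (k+2)
      rcases Nat.lt_or_ge (k % 4) 2 with h4 | h4
      · -- k % 4 = 1, s = 6
        refine ⟨2 * 6, by omega, ?_⟩
        rw [hAgen2 6 (by omega) gg6 (gg_mod3 (by omega)),
          show 2 * 6 = 12 from rfl, f12]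
      · -- k % 4 = 3, s = 12
        refine ⟨2 * 12, by omega, ?_⟩
        rw [hAgen2 12 (by omega) gg12 (gg_mod3 (by omega)),
          show 2 * 12 = 24 from rfl, f24]

lemma card_odd3 (k : ℕ) (hko : k % 2 = 1) :
    ({msAlt false k, msAlt true k, msAlt false (k + 1), msAlt false (k + 2),
      msAlt true (k + 2)} : Set (Multiset Bool)).ncard = 5 :=
  ncard5 (msAlt_ne_odd hko).symm (msAlt_ne_card (by omega)) (msAlt_ne_card (by omega))
    (msAlt_ne_card (by omega)) (msAlt_ne_card (by omega)) (msAlt_ne_card (by omega))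
    (msAlt_ne_card (by omega)) (msAlt_ne_card (by omega)) (msAlt_ne_card (by omega))
    (msAlt_ne_odd (by omega)).symm

lemma main_odd3 (k : ℕ) (hko : k % 2 = 1) :
    redAbelianComplexity paperfold (2 * k + 1) = 5 := by
  unfold redAbelianComplexity
  rw [FS_eq (2 * k + 1) (by omega), set_odd3 k hko]
  exact card_odd3 k hko

end PF9

theorem stmt18 (n : ℕ) (hn : 1 ≤ n) :
    (Even n → redAbelianComplexity paperfold n = 3) ∧
    (1 < n → n % 4 = 1 → redAbelianComplexity paperfold n = 4) ∧
    (n % 4 = 3 → redAbelianComplexity paperfold n = 5) := by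
  refine ⟨?_, ?_, ?_⟩
  · intro he
    obtain ⟨t, rfl⟩ := he
    have h := PF7.main_even t (by omega)
    rwa [show 2 * t = t + t by omega] at h
  · intro h1 h4
    obtain ⟨k, hk, hke, hk2⟩ : ∃ k, n = 2 * k + 1 ∧ k % 2 = 0 ∧ 2 ≤ k :=
      ⟨n / 2, by omega, by omega, by omega⟩
    rw [hk]
    exact PF8.main_odd1 k hk2 hke
  · intro h4
    obtain ⟨k, hk, hko⟩ : ∃ k, n = 2 * k + 1 ∧ k % 2 = 1 := ⟨n / 2, by omega, by omega⟩
    rw [hk]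
    exact PF9.main_odd3 k hko
end
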